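/- Let (X, ≤) be a chain-complete partially ordered set and let F be a nonempty commutative family of chain-continuous maps from X to itself. Then a point u ∈ X is a common fixed point of F if and only if there exists x ∈ X with x ≤ f x for every f ∈ F such that u is a least upper bound of the orbit set {φ x : φ ∈ iter F}. -/

import Mathlib

/-- The composition closure of a family `F` of self-maps: all finite compositions
`f₁ ∘ ⋯ ∘ fₙ` with `n ≥ 1` and each `fᵢ ∈ F`. -/
inductive IterClosure {X : Type*} (F : Set (X → X)) : (X → X) → Prop
  | base {f : X → X} : f ∈ F → IterClosure F f
  | comp {f φ : X → X} : f ∈ F → IterClosure F φ → IterClosure F (f ∘ φ)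

/-- In a chain-complete poset, for a nonempty commutative family `F` of
chain-continuous self-maps, `u` is a common fixed point of `F` iff `u` is a least upper
bound of the orbit `{φ x : φ ∈ iter F}` of some point `x` with `x ≤ f x` for all `f ∈ F`. -/
theorem stmt_2 {X : Type*} [PartialOrder X]
    (hcc : ∀ C : Set X, IsChain (· ≤ ·) C → ∃ s, IsLUB C s)
    (F : Set (X → X)) (hF : F.Nonempty)
    (hcont : ∀ f ∈ F, ∀ C : Set X, C.Nonempty → IsChain (· ≤ ·) C →
      ∀ x, IsLUB C x → IsLUB (f '' C) (f x))
    (hcomm : ∀ f ∈ F, ∀ g ∈ F, f ∘ g = g ∘ f)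
    (u : X) :
    (∀ f ∈ F, f u = u) ↔
      ∃ x : X, (∀ f ∈ F, x ≤ f x) ∧
        IsLUB {y : X | ∃ φ : X → X, IterClosure F φ ∧ y = φ x} u := by
  -- basic facts
  have hmono : ∀ f ∈ F, Monotone f := by
    intro f hf a b hab
    rcases eq_or_lt_of_le hab with rfl | hlt
    · exact le_rfl
    have hchain : IsChain (· ≤ ·) ({a, b} : Set X) := by
      intro p hp q hq _
      rcases hp with rfl | rfl <;> rcases hq with rfl | rfl <;> simp [hab]
    have hlub : IsLUB ({a, b} : Set X) b := by
      constructor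
      · rintro p (rfl | rfl) <;> simp [hab]
      · intro v hv
        exact hv (by simp)
    have := hcont f hf {a, b} ⟨a, by simp⟩ hchain b hlub
    exact this.1 ⟨a, by simp⟩
  have itermono : ∀ φ : X → X, IterClosure F φ → Monotone φ := by
    intro φ hφ
    induction hφ with
    | base hf => exact hmono _ hf
    | comp hf _ ih => exact (hmono _ hf).comp ih
  have itercont : ∀ φ : X → X, IterClosure F φ → ∀ C : Set X, C.Nonempty →
      IsChain (· ≤ ·) C → ∀ s, IsLUB C s → IsLUB (φ '' C) (φ s) := by
    intro φ hφ
    induction hφ with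
    | base hf => exact hcont _ hf
    | @comp f ψ hf hψ ih =>
      intro C hne hchain s hs
      have h1 := ih C hne hchain s hs
      have h2 := hcont f hf (ψ '' C) (hne.image ψ)
        (hchain.image_of_map_rel _ _ _ (fun _ _ h => itermono ψ hψ h)) (ψ s) h1
      simpa [Set.image_image, Function.comp] using h2
  have itercomm : ∀ f ∈ F, ∀ φ : X → X, IterClosure F φ → f ∘ φ = φ ∘ f := by
    intro f hf φ hφ
    induction hφ with
    | base hg => exact hcomm f hf _ hg
    | @comp g ψ hg _ ih =>
      calc f ∘ (g ∘ ψ) = (f ∘ g) ∘ ψ := rfl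
        _ = (g ∘ f) ∘ ψ := by rw [hcomm f hf g hg]
        _ = g ∘ (f ∘ ψ) := rfl
        _ = g ∘ (ψ ∘ f) := by rw [ih]
        _ = (g ∘ ψ) ∘ f := rfl
  constructor
  · -- forward direction: u common fixed point
    intro hfix
    have hiterfix : ∀ φ : X → X, IterClosure F φ → φ u = u := by
      intro φ hφ
      induction hφ with
      | base hf => exact hfix _ hf
      | @comp f ψ hf _ ih => simp [Function.comp, ih, hfix f hf]
    obtain ⟨f₀, hf₀⟩ := hF
    refine ⟨u, fun f hf => (hfix f hf).ge, ?_⟩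
    have : {y : X | ∃ φ : X → X, IterClosure F φ ∧ y = φ u} = {u} := by
      ext y
      constructor
      · rintro ⟨φ, hφ, rfl⟩; exact hiterfix φ hφ
      · rintro rfl; exact ⟨f₀, .base hf₀, (hiterfix f₀ (.base hf₀)).symm⟩
    rw [this]
    exact isLUB_singleton
  · -- backward direction
    rintro ⟨x, hx, hu⟩
    set O := {y : X | ∃ φ : X → X, IterClosure F φ ∧ y = φ x} with hO
    have hOle : ∀ φ : X → X, IterClosure F φ → φ x ≤ u := fun φ hφ => hu.1 ⟨φ, hφ, rfl⟩
    obtain ⟨f₀, hf₀⟩ := hF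
    have hxu : x ≤ u := (hx f₀ hf₀).trans (hOle f₀ (.base hf₀))
    -- the auxiliary set Z
    set Z := {y : X | x ≤ y ∧ y ≤ u ∧ (∀ f ∈ F, y ≤ f y) ∧
      ∀ φ : X → X, IterClosure F φ → φ y ≤ u} with hZ
    have hxZ : x ∈ Z := ⟨le_rfl, hxu, hx, hOle⟩
    have hZf : ∀ y ∈ Z, ∀ f ∈ F, f y ∈ Z := by
      rintro y ⟨hxy, hyu, hyexp, hyorb⟩ f hf
      refine ⟨hxy.trans (hyexp f hf), hyorb f (.base hf), ?_, ?_⟩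
      · intro g hg
        have : g (f y) = f (g y) := congrFun (hcomm g hg f hf) y
        rw [this]
        exact hmono f hf (hyexp g hg)
      · intro φ hφ
        have : φ (f y) = f (φ y) := (congrFun (itercomm f hf φ hφ) y).symm
        rw [this]
        exact hyorb (f ∘ φ) (.comp hf hφ)
    -- Z is closed under lubs of nonempty chains
    have hZchain : ∀ C ⊆ Z, IsChain (· ≤ ·) C → C.Nonempty →
        ∃ s ∈ Z, ∀ c ∈ C, c ≤ s := by
      intro C hCZ hchain hne
      obtain ⟨s, hs⟩ := hcc C hchain
      obtain ⟨c₀, hc₀⟩ := id hne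
      refine ⟨s, ⟨(hCZ hc₀).1.trans (hs.1 hc₀), ?_, ?_, ?_⟩, fun c hc => hs.1 hc⟩
      · exact hs.2 (fun c hc => (hCZ hc).2.1)
      · intro f hf
        have hfs := hcont f hf C hne hchain s hs
        refine hs.2 (fun c hc => ?_)
        exact ((hCZ hc).2.2.1 f hf).trans (hfs.1 ⟨c, hc, rfl⟩)
      · intro φ hφ
        have hφs := itercont φ hφ C hne hchain s hs
        refine hφs.2 ?_
        rintro _ ⟨c, hc, rfl⟩
        exact (hCZ hc).2.2.2 φ hφ
    -- Zorn's lemma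
    obtain ⟨m, hxm, hmZ, hmmax⟩ := zorn_le_nonempty₀ Z
      (fun C hCZ hchain y hy => hZchain C hCZ hchain ⟨y, hy⟩) x hxZ
    have hmfix : ∀ f ∈ F, f m = m := by
      intro f hf
      have hfm := hZf m hmZ f hf
      exact (hmmax hfm (hmZ.2.2.1 f hf)).antisymm (hmZ.2.2.1 f hf)
    have hiterfixm : ∀ φ : X → X, IterClosure F φ → φ m = m := by
      intro φ hφ
      induction hφ with
      | base hf => exact hmfix _ hf
      | @comp f ψ hf _ ih => simp [Function.comp, ih, hmfix f hf]
    -- m is an upper bound of the orbit, so u ≤ m, hence u = m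
    have hum : u ≤ m := by
      refine hu.2 ?_
      rintro _ ⟨φ, hφ, rfl⟩
      calc φ x ≤ φ m := itermono φ hφ hxm
        _ = m := hiterfixm φ hφ
    have : u = m := le_antisymm hum hmZ.2.1
    intro f hf
    rw [this]
    exact hmfix f hf
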